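/- Let p ≥ 1, let z be a standard Gaussian vector in ℝᵖ and x = z/‖z‖. Let ΔΩ' be a symmetric p×p real matrix with spectral norm ε = ‖ΔΩ'‖₂, let α ∈ [0,1] with α·ε < 1, and let ν ≥ 1 be a natural number. Then | E[((xᵀΔΩ'x)/(xᵀ(I + αΔΩ')x))ᵛ] − E[(xᵀΔΩ'x)ᵛ] + ν·α·E[(xᵀΔΩ'x)^{ν+1}] | ≤ (ν(ν+1)α²/(2(1−αε)^{ν+2}))·E[|xᵀΔΩ'x|^{ν+2}]. -/

import Mathlib

open MeasureTheory ProbabilityTheory Matrix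

/-- The standard Gaussian measure `N(0, I_p)` on `ℝᵖ`, as the `p`-fold product of
standard normal distributions. -/
noncomputable def stdGaussian (p : ℕ) : Measure (Fin p → ℝ) :=
  Measure.pi fun _ => gaussianReal 0 1

/-- Euclidean norm of a vector in `ℝᵖ`. -/
noncomputable def euclNorm {p : ℕ} (v : Fin p → ℝ) : ℝ := Real.sqrt (v ⬝ᵥ v)

/-- Frobenius norm of a real matrix. -/
noncomputable def frobNorm {p : ℕ} (A : Matrix (Fin p) (Fin p) ℝ) : ℝ :=
  Real.sqrt (Matrix.trace (Aᵀ * A))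

/-- Spectral (L2 operator) norm of a real matrix. -/
noncomputable def specNorm {p : ℕ} (A : Matrix (Fin p) (Fin p) ℝ) : ℝ :=
  sSup {r : ℝ | ∃ v : Fin p → ℝ, euclNorm v = 1 ∧ r = euclNorm (A.mulVec v)}

/-- Minimal eigenvalue of a symmetric real matrix (via the Rayleigh quotient). -/
noncomputable def lambdaMin {p : ℕ} (A : Matrix (Fin p) (Fin p) ℝ) : ℝ :=
  sInf {r : ℝ | ∃ v : Fin p → ℝ, euclNorm v = 1 ∧ r = v ⬝ᵥ A.mulVec v}

/-- Maximal eigenvalue of a symmetric real matrix (via the Rayleigh quotient). -/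
noncomputable def lambdaMax {p : ℕ} (A : Matrix (Fin p) (Fin p) ℝ) : ℝ :=
  sSup {r : ℝ | ∃ v : Fin p → ℝ, euclNorm v = 1 ∧ r = v ⬝ᵥ A.mulVec v}

/-- Normalization of a vector to the unit sphere: `z ↦ z / ‖z‖`. -/
noncomputable def unitize {p : ℕ} (z : Fin p → ℝ) : Fin p → ℝ := (euclNorm z)⁻¹ • z

/-- `cos φ₀ = Tr Ω / (√p ‖Ω‖_F)`: the cosine of the angle between `Ω` and the identity. -/
noncomputable def cosAngleId {p : ℕ} (Ω : Matrix (Fin p) (Fin p) ℝ) : ℝ :=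
  Matrix.trace Ω / (Real.sqrt p * frobNorm Ω)

/-! ### Auxiliary lemmas -/

private lemma Qbound (ν : ℕ) (hν : 1 ≤ ν) (u : ℝ) (hu : 0 < u) :
    0 ≤ (ν:ℝ)*(u-1)*u^ν - u^ν + 1 ∧
    (ν:ℝ)*(u-1)*u^ν - u^ν + 1 ≤ (ν:ℝ)*((ν:ℝ)+1)/2*(u-1)^2 * (max 1 u)^(ν-1) := by
  induction ν, hν using Nat.le_induction with
  | base =>
    constructor <;> simp <;> nlinarith [sq_nonneg (u-1)]
  | succ n hn ih =>
    obtain ⟨ih1, ih2⟩ := ih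
    have hrec : (↑(n+1):ℝ)*(u-1)*u^(n+1) - u^(n+1) + 1
        = ((n:ℝ)*(u-1)*u^n - u^n + 1) + ((n:ℝ)+1)*u^n*(u-1)^2 := by
      push_cast; ring
    have hM1 : (1:ℝ) ≤ max 1 u := le_max_left _ _
    have hMu : u ≤ max 1 u := le_max_right _ _
    have hM0 : (0:ℝ) < max 1 u := lt_of_lt_of_le one_pos hM1
    have hpow1 : (max 1 u)^(n-1) ≤ (max 1 u)^n := pow_le_pow_right₀ hM1 (Nat.sub_le n 1)
    have hpow2 : u^n ≤ (max 1 u)^n := pow_le_pow_left₀ hu.le hMu n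
    have hun : (0:ℝ) ≤ u^n := (pow_pos hu n).le
    have hMn : (0:ℝ) ≤ (max 1 u)^n := (pow_pos hM0 n).le
    constructor
    · rw [hrec]
      have : (0:ℝ) ≤ ((n:ℝ)+1)*u^n*(u-1)^2 := by positivity
      linarith
    · rw [hrec]
      have h2 : (↑(n+1):ℝ)*((↑(n+1):ℝ)+1)/2*(u-1)^2 * (max 1 u)^(n+1-1)
          = ((n:ℝ)*((n:ℝ)+1)/2*(u-1)^2 * (max 1 u)^n) + (((n:ℝ)+1)*(u-1)^2*(max 1 u)^n) := by
        have : n+1-1 = n := rfl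
        rw [this]; push_cast; ring
      rw [h2]
      have hc1 : (n:ℝ)*((n:ℝ)+1)/2*(u-1)^2 * (max 1 u)^(n-1) ≤ (n:ℝ)*((n:ℝ)+1)/2*(u-1)^2 * (max 1 u)^n := by
        have : (0:ℝ) ≤ (n:ℝ)*((n:ℝ)+1)/2*(u-1)^2 := by positivity
        exact mul_le_mul_of_nonneg_left hpow1 this
      have hc2 : ((n:ℝ)+1)*u^n*(u-1)^2 ≤ ((n:ℝ)+1)*(u-1)^2*(max 1 u)^n := by
        have h0 : (0:ℝ) ≤ ((n:ℝ)+1)*(u-1)^2 := by positivity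
        calc ((n:ℝ)+1)*u^n*(u-1)^2 = ((n:ℝ)+1)*(u-1)^2*u^n := by ring
        _ ≤ ((n:ℝ)+1)*(u-1)^2*(max 1 u)^n := mul_le_mul_of_nonneg_left hpow2 h0
      linarith

private lemma pointwiseTaylor (ε α : ℝ) (hε : 0 ≤ ε) (hα0 : 0 ≤ α) (hαε : α*ε < 1)
    (ν : ℕ) (hν : 1 ≤ ν) (s : ℝ) (hs : |s| ≤ ε) :
    |(s/(1+α*s))^ν - s^ν + (ν:ℝ)*α*s^(ν+1)|
      ≤ (ν:ℝ)*((ν:ℝ)+1)*α^2/(2*(1-α*ε)^(ν+2)) * |s|^(ν+2) := by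
  set δ := 1 - α*ε with hδdef
  have hδ : 0 < δ := by simp [hδdef]; linarith
  have hδ1 : δ ≤ 1 := by
    have : 0 ≤ α*ε := mul_nonneg hα0 hε
    simp [hδdef]; linarith
  set u := 1 + α*s with hudef
  have hu : δ ≤ u := by
    have h1 : α*(-|s|) ≤ α*s := by
      have := neg_abs_le s
      exact mul_le_mul_of_nonneg_left this hα0
    have h2 : α*|s| ≤ α*ε := mul_le_mul_of_nonneg_left hs hα0
    simp [hudef, hδdef]; nlinarith
  have hu0 : 0 < u := lt_of_lt_of_le hδ hu
  set M := max 1 u with hMdef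
  set Q := (ν:ℝ)*(u-1)*u^ν - u^ν + 1 with hQdef
  obtain ⟨hQ0, hQle⟩ := Qbound ν hν u hu0
  set K := (ν:ℝ)*((ν:ℝ)+1)/2 with hKdef
  have huν : (0:ℝ) < u^ν := pow_pos hu0 ν
  have hid : (s/u)^ν - s^ν + (ν:ℝ)*α*s^(ν+1) = s^ν * Q / u^ν := by
    rw [hQdef, hudef, div_pow]
    have hune : (1:ℝ) + α*s ≠ 0 := hu0.ne'
    field_simp
    ring
  have habs : |(s/u)^ν - s^ν + (ν:ℝ)*α*s^(ν+1)| = |s|^ν * Q / u^ν := by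
    rw [hid, abs_div, abs_mul, abs_pow, abs_of_nonneg hQ0, abs_of_pos huν]
  rw [show (1:ℝ) + α*s = u from rfl] at *
  rw [habs]
  have hkey : δ^(ν+2) * M^(ν-1) ≤ u^ν := by
    rcases le_total 1 u with h | h
    · rw [hMdef, max_eq_right h]
      have h1 : δ^(ν+2) ≤ 1 := pow_le_one₀ hδ.le hδ1
      calc δ^(ν+2)*u^(ν-1) ≤ 1*u^(ν-1) :=
            mul_le_mul_of_nonneg_right h1 (pow_nonneg hu0.le _)
        _ = u^(ν-1) := one_mul _
        _ ≤ u^ν := pow_le_pow_right₀ h (Nat.sub_le ν 1)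
    · rw [hMdef, max_eq_left h, one_pow, mul_one, pow_add]
      have h1 : δ^ν ≤ u^ν := pow_le_pow_left₀ hδ.le hu ν
      have h2 : δ^2 ≤ 1 := pow_le_one₀ hδ.le hδ1
      nlinarith [pow_nonneg hδ.le ν, pow_nonneg hδ.le 2]
  have step1 : |s|^ν * Q / u^ν ≤ |s|^ν * (K*α^2*s^2*M^(ν-1)) / u^ν := by
    gcongr
    calc Q ≤ K*(u-1)^2*M^(ν-1) := hQle
      _ = K*α^2*s^2*M^(ν-1) := by rw [hudef]; ring
  have step2 : |s|^ν * (K*α^2*s^2*M^(ν-1)) / u^ν ≤ (K*α^2*|s|^(ν+2)) / δ^(ν+2) := by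
    rw [div_le_div_iff₀ huν (pow_pos hδ (ν+2))]
    have e : |s|^ν * (K*α^2*s^2*M^(ν-1)) * δ^(ν+2)
        = (K*α^2*|s|^(ν+2)) * (δ^(ν+2)*M^(ν-1)) := by
      rw [pow_add, ← sq_abs s]; ring
    rw [e]
    exact mul_le_mul_of_nonneg_left hkey (by positivity)
  have efin : (K*α^2*|s|^(ν+2)) / δ^(ν+2)
      = (ν:ℝ)*((ν:ℝ)+1)*α^2/(2*δ^(ν+2)) * |s|^(ν+2) := by
    rw [hKdef]
    field_simp
  calc |s|^ν * Q / u^ν ≤ |s|^ν * (K*α^2*s^2*M^(ν-1)) / u^ν := step1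
    _ ≤ (K*α^2*|s|^(ν+2)) / δ^(ν+2) := step2
    _ = _ := efin

private lemma dot_self_nonneg' {p : ℕ} (v : Fin p → ℝ) : 0 ≤ v ⬝ᵥ v :=
  Finset.sum_nonneg fun i _ => mul_self_nonneg (v i)

private lemma euclNorm_nonneg' {p : ℕ} (v : Fin p → ℝ) : 0 ≤ euclNorm v := Real.sqrt_nonneg _

private lemma sq_euclNorm {p : ℕ} (v : Fin p → ℝ) : euclNorm v ^ 2 = v ⬝ᵥ v :=
  Real.sq_sqrt (dot_self_nonneg' v)

private lemma abs_dot_le {p : ℕ} (v w : Fin p → ℝ) : |v ⬝ᵥ w| ≤ euclNorm v * euclNorm w := by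
  have h := Finset.sum_mul_sq_le_sq_mul_sq Finset.univ v w
  have h2 : (v ⬝ᵥ w)^2 ≤ (v ⬝ᵥ v) * (w ⬝ᵥ w) := by
    simpa [dotProduct, pow_two, Finset.sum_mul_sum] using
      (by simpa [pow_two] using h : (∑ i, v i * w i) ^ 2 ≤ (∑ i, v i * v i) * ∑ i, w i * w i)
  calc |v ⬝ᵥ w| = Real.sqrt ((v ⬝ᵥ w)^2) := (Real.sqrt_sq_eq_abs _).symm
    _ ≤ Real.sqrt ((v ⬝ᵥ v) * (w ⬝ᵥ w)) := Real.sqrt_le_sqrt h2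
    _ = euclNorm v * euclNorm w := Real.sqrt_mul (dot_self_nonneg' v) _

private lemma mulVec_norm_le_frob {p : ℕ} (A : Matrix (Fin p) (Fin p) ℝ) (v : Fin p → ℝ)
    (hv : euclNorm v = 1) : euclNorm (A.mulVec v) ≤ frobNorm A := by
  have hvv : v ⬝ᵥ v = 1 := by rw [← sq_euclNorm, hv]; norm_num
  have h : (A.mulVec v) ⬝ᵥ (A.mulVec v) ≤ Matrix.trace (Aᵀ * A) := by
    have hrow : ∀ i, (A.mulVec v i)^2 ≤ (∑ j, A i j ^ 2) := by
      intro i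
      have := Finset.sum_mul_sq_le_sq_mul_sq Finset.univ (fun j => A i j) v
      have hvsq : (∑ j, v j ^ 2) = 1 := by
        simpa [dotProduct, pow_two] using hvv
      simpa [Matrix.mulVec, dotProduct, hvsq] using this
    have htr : Matrix.trace (Aᵀ * A) = ∑ i, ∑ j, A i j ^ 2 := by
      simp [Matrix.trace, Matrix.mul_apply, Matrix.diag, pow_two]
      rw [Finset.sum_comm]
    rw [htr]
    calc (A.mulVec v) ⬝ᵥ (A.mulVec v) = ∑ i, (A.mulVec v i)^2 := by
          simp [dotProduct, pow_two]
      _ ≤ ∑ i, ∑ j, A i j ^ 2 := Finset.sum_le_sum fun i _ => hrow i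
  exact Real.sqrt_le_sqrt h

private lemma specSet_bdd {p : ℕ} (A : Matrix (Fin p) (Fin p) ℝ) :
    BddAbove {r : ℝ | ∃ v : Fin p → ℝ, euclNorm v = 1 ∧ r = euclNorm (A.mulVec v)} := by
  refine ⟨frobNorm A, fun r hr => ?_⟩
  obtain ⟨v, hv, rfl⟩ := hr
  exact mulVec_norm_le_frob A v hv

private lemma le_specNorm {p : ℕ} (A : Matrix (Fin p) (Fin p) ℝ) (v : Fin p → ℝ)
    (hv : euclNorm v = 1) : euclNorm (A.mulVec v) ≤ specNorm A :=
  le_csSup (specSet_bdd A) ⟨v, hv, rfl⟩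

private lemma rayleigh_le_specNorm {p : ℕ} (A : Matrix (Fin p) (Fin p) ℝ) (v : Fin p → ℝ)
    (hv : euclNorm v = 1) : |v ⬝ᵥ A.mulVec v| ≤ specNorm A := by
  calc |v ⬝ᵥ A.mulVec v| ≤ euclNorm v * euclNorm (A.mulVec v) := abs_dot_le _ _
    _ = euclNorm (A.mulVec v) := by rw [hv, one_mul]
    _ ≤ specNorm A := le_specNorm A v hv

private lemma specNorm_nonneg' {p : ℕ} (hp : 1 ≤ p) (A : Matrix (Fin p) (Fin p) ℝ) :
    0 ≤ specNorm A := by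
  have i0 : Fin p := ⟨0, hp⟩
  set e : Fin p → ℝ := Pi.single i0 1 with he
  have hev : euclNorm e = 1 := by
    have : e ⬝ᵥ e = 1 := by
      simp [he, dotProduct, Pi.single_apply]
    rw [euclNorm, this, Real.sqrt_one]
  calc (0:ℝ) ≤ euclNorm (A.mulVec e) := euclNorm_nonneg' _
    _ ≤ specNorm A := le_specNorm A e hev

private lemma unitize_unit {p : ℕ} {z : Fin p → ℝ} (hz : z ≠ 0) :
    unitize z ⬝ᵥ unitize z = 1 := by
  have hzz : 0 < z ⬝ᵥ z := by
    rcases lt_or_eq_of_le (dot_self_nonneg' z) with h | h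
    · exact h
    · exfalso; apply hz
      funext i
      have hnn : ∀ j ∈ Finset.univ, 0 ≤ z j * z j := fun j _ => mul_self_nonneg _
      have h0 : z i * z i = 0 :=
        (Finset.sum_eq_zero_iff_of_nonneg hnn).mp h.symm i (Finset.mem_univ i)
      have := mul_self_eq_zero.mp h0
      simp [this]
  have hen : euclNorm z = Real.sqrt (z ⬝ᵥ z) := rfl
  have hsq : (Real.sqrt (z ⬝ᵥ z))^2 = z ⬝ᵥ z := Real.sq_sqrt hzz.le
  have hne : Real.sqrt (z ⬝ᵥ z) ≠ 0 := by positivity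
  simp only [unitize, hen]
  rw [smul_dotProduct, dotProduct_smul]
  field_simp
  simp only [smul_eq_mul]
  field_simp
  nlinarith [hsq]

private lemma euclNorm_unitize {p : ℕ} {z : Fin p → ℝ} (hz : z ≠ 0) :
    euclNorm (unitize z) = 1 := by
  rw [euclNorm, unitize_unit hz, Real.sqrt_one]

private lemma unitize_zero {p : ℕ} : unitize (0 : Fin p → ℝ) = 0 := by
  simp [unitize]

private lemma measurable_unitize {p : ℕ} :
    Measurable (unitize : (Fin p → ℝ) → (Fin p → ℝ)) := by
  have hdot : Measurable fun z : Fin p → ℝ => z ⬝ᵥ z := by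
    unfold dotProduct
    exact Finset.measurable_sum _ fun i _ => ((measurable_pi_apply i).mul (measurable_pi_apply i))
  have hnorm : Measurable fun z : Fin p → ℝ => (euclNorm z)⁻¹ :=
    (Real.continuous_sqrt.measurable.comp hdot).inv
  exact measurable_pi_lambda _ fun i => (hnorm.mul (measurable_pi_apply i))

private lemma measurable_quad {p : ℕ} (A : Matrix (Fin p) (Fin p) ℝ) :
    Measurable fun z : Fin p → ℝ => unitize z ⬝ᵥ A.mulVec (unitize z) := by
  have hcont : Measurable fun v : Fin p → ℝ => v ⬝ᵥ A.mulVec v := by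
    unfold dotProduct Matrix.mulVec
    refine Finset.measurable_sum _ fun i _ => (measurable_pi_apply i).mul ?_
    exact Finset.measurable_sum _ fun j _ => measurable_const.mul (measurable_pi_apply j)
  exact hcont.comp measurable_unitize

instance stdGaussian_isProbability (p : ℕ) : IsProbabilityMeasure (stdGaussian p) := by
  unfold _root_.stdGaussian; infer_instance

private lemma integrable_of_bound {p : ℕ} {f : (Fin p → ℝ) → ℝ} (hf : Measurable f)
    (K : ℝ) (h : ∀ z, |f z| ≤ K) : Integrable f (stdGaussian p) := by
  refine Integrable.mono' (integrable_const K) hf.aestronglyMeasurable ?_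
  exact ae_of_all _ fun z => by simpa [Real.norm_eq_abs] using h z

/-- For `x = z/‖z‖` with `z` standard Gaussian in `ℝᵖ`, symmetric `ΔΩ'` with
`ε = ‖ΔΩ'‖₂`, `α ∈ [0,1]` with `αε < 1`, and `ν ≥ 1`:
`|E[((xᵀΔΩ'x)/(xᵀ(I+αΔΩ')x))ᵛ] − E[(xᵀΔΩ'x)ᵛ] + να E[(xᵀΔΩ'x)^{ν+1}]|
  ≤ (ν(ν+1)α²/(2(1−αε)^{ν+2})) E[|xᵀΔΩ'x|^{ν+2}]`. -/
theorem ratio_moment_taylor (p : ℕ) (hp : 1 ≤ p)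
    (ΔΩ : Matrix (Fin p) (Fin p) ℝ) (hΔ : ΔΩ.IsSymm)
    (α : ℝ) (hα0 : 0 ≤ α) (hα1 : α ≤ 1) (hαε : α * specNorm ΔΩ < 1)
    (ν : ℕ) (hν : 1 ≤ ν) :
    |(∫ z, ((unitize z ⬝ᵥ ΔΩ.mulVec (unitize z))
          / (unitize z ⬝ᵥ (1 + α • ΔΩ).mulVec (unitize z))) ^ ν ∂(stdGaussian p))
      - (∫ z, (unitize z ⬝ᵥ ΔΩ.mulVec (unitize z)) ^ ν ∂(stdGaussian p))
      + (ν : ℝ) * α * ∫ z, (unitize z ⬝ᵥ ΔΩ.mulVec (unitize z)) ^ (ν + 1) ∂(stdGaussian p)|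
      ≤ ((ν : ℝ) * ((ν : ℝ) + 1) * α ^ 2 / (2 * (1 - α * specNorm ΔΩ) ^ (ν + 2)))
          * ∫ z, |unitize z ⬝ᵥ ΔΩ.mulVec (unitize z)| ^ (ν + 2) ∂(stdGaussian p) := by
  set μ := stdGaussian p with hμ
  set ε := specNorm ΔΩ with hε
  have hε0 : 0 ≤ ε := specNorm_nonneg' hp ΔΩ
  have hδ : 0 < 1 - α * ε := by linarith
  set s : (Fin p → ℝ) → ℝ := fun z => unitize z ⬝ᵥ ΔΩ.mulVec (unitize z) with hs
  set d : (Fin p → ℝ) → ℝ := fun z => unitize z ⬝ᵥ (1 + α • ΔΩ).mulVec (unitize z) with hd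
  set C : ℝ := (ν : ℝ) * ((ν : ℝ) + 1) * α ^ 2 / (2 * (1 - α * ε) ^ (ν + 2)) with hC
  have hC0 : 0 ≤ C := by
    rw [hC]; positivity
  -- basic facts
  have hsz : s 0 = 0 := by simp [hs, unitize_zero]
  have hdz : d 0 = 0 := by simp [hd, unitize_zero]
  have hsb : ∀ z, |s z| ≤ ε := by
    intro z
    by_cases hz : z = (0 : Fin p → ℝ)
    · rw [hz, hsz]; simpa using hε0
    · exact rayleigh_le_specNorm ΔΩ _ (euclNorm_unitize hz)
  have hdeq : ∀ z, z ≠ (0 : Fin p → ℝ) → d z = 1 + α * s z := by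
    intro z hz
    have : (1 + α • ΔΩ).mulVec (unitize z)
        = unitize z + α • (ΔΩ.mulVec (unitize z)) := by
      rw [Matrix.add_mulVec, Matrix.one_mulVec, Matrix.smul_mulVec]
    rw [hd]
    simp only [this, dotProduct_add, dotProduct_smul, unitize_unit hz, smul_eq_mul]
    rfl
  have hdlb : ∀ z, z ≠ (0 : Fin p → ℝ) → 1 - α * ε ≤ d z := by
    intro z hz
    rw [hdeq z hz]
    have h1 : α * (-|s z|) ≤ α * s z :=
      mul_le_mul_of_nonneg_left (neg_abs_le _) hα0
    have h2 : α * |s z| ≤ α * ε := mul_le_mul_of_nonneg_left (hsb z) hα0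
    nlinarith
  -- pointwise bound
  have hνne : ν ≠ 0 := Nat.one_le_iff_ne_zero.mp hν
  have hpoint : ∀ z, |(s z / d z) ^ ν - (s z) ^ ν + (ν : ℝ) * α * (s z) ^ (ν + 1)|
      ≤ C * |s z| ^ (ν + 2) := by
    intro z
    by_cases hz : z = (0 : Fin p → ℝ)
    · rw [hz, hsz, hdz]
      simp [zero_pow hνne]
    · rw [hdeq z hz]
      exact pointwiseTaylor ε α hε0 hα0 hαε ν hν (s z) (hsb z)
  -- measurability
  have hms : Measurable s := measurable_quad ΔΩ
  have hmd : Measurable d := measurable_quad _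
  -- integrability
  have h1 : Integrable (fun z => (s z / d z) ^ ν) μ := by
    refine integrable_of_bound ((hms.div hmd).pow_const ν) ((ε / (1 - α * ε)) ^ ν) ?_
    intro z
    rw [abs_pow]
    refine pow_le_pow_left₀ (abs_nonneg _) ?_ ν
    by_cases hz : z = (0 : Fin p → ℝ)
    · rw [hz, hsz]
      simp
      positivity
    · rw [abs_div, abs_of_pos (lt_of_lt_of_le hδ (hdlb z hz))]
      exact div_le_div₀ hε0 (hsb z) hδ (hdlb z hz)
  have h2 : Integrable (fun z => (s z) ^ ν) μ := by
    refine integrable_of_bound (hms.pow_const ν) (ε ^ ν) fun z => ?_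
    rw [abs_pow]
    exact pow_le_pow_left₀ (abs_nonneg _) (hsb z) ν
  have h3 : Integrable (fun z => (s z) ^ (ν + 1)) μ := by
    refine integrable_of_bound (hms.pow_const _) (ε ^ (ν + 1)) fun z => ?_
    rw [abs_pow]
    exact pow_le_pow_left₀ (abs_nonneg _) (hsb z) _
  have h4 : Integrable (fun z => |s z| ^ (ν + 2)) μ := by
    refine integrable_of_bound (hms.abs.pow_const _) (ε ^ (ν + 2)) fun z => ?_
    rw [abs_pow, abs_abs]
    exact pow_le_pow_left₀ (abs_nonneg _) (hsb z) _
  -- the combined function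
  set F : (Fin p → ℝ) → ℝ :=
    fun z => (s z / d z) ^ ν - (s z) ^ ν + (ν : ℝ) * α * (s z) ^ (ν + 1) with hF
  have hFint : Integrable F μ := (h1.sub h2).add (h3.const_mul _)
  have hint : ∫ z, F z ∂μ
      = (∫ z, (s z / d z) ^ ν ∂μ) - (∫ z, (s z) ^ ν ∂μ)
        + (ν : ℝ) * α * ∫ z, (s z) ^ (ν + 1) ∂μ := by
    calc ∫ z, F z ∂μ
        = ∫ z, ((s z / d z) ^ ν - (s z) ^ ν) + ((ν : ℝ) * α) * (s z) ^ (ν + 1) ∂μ := by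
          rfl
      _ = (∫ z, (s z / d z) ^ ν - (s z) ^ ν ∂μ)
            + ∫ z, ((ν : ℝ) * α) * (s z) ^ (ν + 1) ∂μ :=
          integral_add (h1.sub h2) (h3.const_mul _)
      _ = _ := by rw [integral_sub h1 h2, integral_const_mul]
  rw [← hint]
  calc |∫ z, F z ∂μ| ≤ ∫ z, |F z| ∂μ := by
        simpa [Real.norm_eq_abs] using norm_integral_le_integral_norm (μ := μ) F
    _ ≤ ∫ z, C * |s z| ^ (ν + 2) ∂μ := integral_mono hFint.abs (h4.const_mul C) hpoint
    _ = C * ∫ z, |s z| ^ (ν + 2) ∂μ := integral_const_mul C _
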